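/- Let g : (0,∞) → [0,∞) be continuous. Then there exists a nondecreasing continuous function h : [0,∞) → [0,∞) such that h(x) > 0 whenever x > 0, and the product x ↦ g(x)h(x) extends to a continuous function on [0,∞) (i.e., the limit of g(x)h(x) as x → 0⁺ exists). -/

import Mathlib

open Set MeasureTheory intervalIntegral

theorem stmt_12 (g : ℝ → ℝ) (hg : ContinuousOn g (Ioi (0:ℝ)))
    (hg0 : ∀ x > (0:ℝ), 0 ≤ g x) :
    ∃ h : ℝ → ℝ, ContinuousOn h (Ici (0:ℝ)) ∧ MonotoneOn h (Ici (0:ℝ)) ∧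
      (∀ x ∈ Ici (0:ℝ), 0 ≤ h x) ∧ (∀ x > (0:ℝ), 0 < h x) ∧
      ∃ G : ℝ → ℝ, ContinuousOn G (Ici (0:ℝ)) ∧ ∀ x > (0:ℝ), G x = g x * h x := by
  -- running sup of g
  set N : ℝ → ℝ := fun t => sSup (g '' Icc (min t 1) 1) with hN
  set φ : ℝ → ℝ := fun t => if t ≤ 0 then 0 else 1 / (1 + max (N t) 0) with hφ
  have hsub : ∀ t : ℝ, 0 < t → Icc (min t 1) 1 ⊆ Ioi (0:ℝ) := by
    intro t ht y hy
    exact lt_of_lt_of_le (lt_min ht one_pos) hy.1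
  have hbdd : ∀ t : ℝ, 0 < t → BddAbove (g '' Icc (min t 1) 1) := by
    intro t ht
    exact (isCompact_Icc.image_of_continuousOn (hg.mono (hsub t ht))).bddAbove
  have hne : ∀ t : ℝ, (g '' Icc (min t 1) 1).Nonempty := by
    intro t
    exact ⟨g 1, mem_image_of_mem g ⟨min_le_right _ _, le_refl 1⟩⟩
  have hNanti : ∀ s t : ℝ, 0 < s → s ≤ t → N t ≤ N s := by
    intro s t hs hst
    exact csSup_le_csSup (hbdd s hs) (hne t)
      (image_mono (f := g) (Icc_subset_Icc_left (min_le_min hst le_rfl)))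
  have hgleN : ∀ x : ℝ, 0 < x → x ≤ 1 → g x ≤ N x := by
    intro x hx hx1
    exact le_csSup (hbdd x hx) (mem_image_of_mem g ⟨min_le_left _ _ |>.trans le_rfl |>.trans_eq rfl |>.trans le_rfl |>.trans (le_refl x) , hx1⟩)
  have hφ01 : ∀ t : ℝ, 0 ≤ φ t ∧ φ t ≤ 1 := by
    intro t
    simp only [hφ]
    split
    · exact ⟨le_rfl, zero_le_one⟩
    · constructor
      · positivity
      · rw [div_le_one (by positivity)]
        linarith [le_max_right (N t) 0]
  have hφpos : ∀ t : ℝ, 0 < t → 0 < φ t := by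
    intro t ht
    simp only [hφ, if_neg (not_le.mpr ht)]
    positivity
  have hφmono : Monotone φ := by
    intro s t hst
    by_cases hs : s ≤ 0
    · by_cases ht : t ≤ 0
      · simp [hφ, hs, ht]
      · simp only [hφ, if_pos hs]
        exact (hφ01 t).1.trans_eq (by simp [hφ])
    · have hs' : 0 < s := not_le.mp hs
      have ht' : ¬ t ≤ 0 := not_le.mpr (hs'.trans_le hst)
      simp only [hφ, if_neg hs, if_neg ht']
      apply one_div_le_one_div_of_le (by positivity)
      have := hNanti s t hs' hst
      have : max (N t) 0 ≤ max (N s) 0 := max_le_max this le_rfl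
      linarith
  have hφint : ∀ a b : ℝ, IntervalIntegrable φ volume a b := by
    intro a b
    exact (hφmono.monotoneOn _).intervalIntegrable
  set h : ℝ → ℝ := fun x => ∫ t in (0:ℝ)..x, φ t with hh
  -- Lipschitz
  have hlip : LipschitzWith 1 h := by
    apply LipschitzWith.of_dist_le_mul
    intro x y
    have hsub : h x - h y = ∫ t in y..x, φ t := by
      rw [hh]
      simp only
      rw [← intervalIntegral.integral_interval_sub_left (hφint 0 x) (hφint 0 y)]
    have key : ‖∫ t in y..x, φ t‖ ≤ 1 * |x - y| := by
      apply intervalIntegral.norm_integral_le_of_norm_le_const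
      intro t _
      rw [Real.norm_eq_abs, abs_le]
      exact ⟨by linarith [(hφ01 t).1], (hφ01 t).2⟩
    rw [Real.dist_eq, Real.dist_eq, hsub]
    rw [Real.norm_eq_abs] at key
    simpa using key
  have hcont : Continuous h := hlip.continuous
  have hmono : Monotone h := by
    intro x y hxy
    have : h y - h x = ∫ t in x..y, φ t := by
      rw [hh]; simp only
      rw [← intervalIntegral.integral_interval_sub_left (hφint 0 y) (hφint 0 x)]
    have hnn : 0 ≤ ∫ t in x..y, φ t :=
      intervalIntegral.integral_nonneg hxy (fun t _ => (hφ01 t).1)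
    linarith [this ▸ hnn]
  have h0 : h 0 = 0 := by simp [hh]
  have hnonneg : ∀ x ∈ Ici (0:ℝ), 0 ≤ h x := by
    intro x hx
    rw [← h0]; exact hmono hx
  have hpos : ∀ x : ℝ, 0 < x → 0 < h x := by
    intro x hx
    have hsplit : h x = (∫ t in (0:ℝ)..(x/2), φ t) + ∫ t in (x/2)..x, φ t := by
      rw [hh]; simp only
      rw [intervalIntegral.integral_add_adjacent_intervals (hφint 0 (x/2)) (hφint (x/2) x)]
    have h1 : 0 ≤ ∫ t in (0:ℝ)..(x/2), φ t :=
      intervalIntegral.integral_nonneg (by linarith) (fun t _ => (hφ01 t).1)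
    have h2 : (x - x/2) * φ (x/2) ≤ ∫ t in (x/2)..x, φ t := by
      have := intervalIntegral.integral_mono_on (by linarith : x/2 ≤ x)
        (intervalIntegrable_const) (hφint (x/2) x)
        (fun t ht => hφmono ht.1)
      simpa using this
    have : 0 < (x - x/2) * φ (x/2) := by
      have := hφpos (x/2) (by linarith)
      nlinarith
    linarith [hsplit]
  -- key bound: g x * h x ≤ x for 0 < x ≤ 1
  have hbound : ∀ x : ℝ, 0 < x → x ≤ 1 → g x * h x ≤ x := by
    intro x hx hx1
    have hhx : h x ≤ x * φ x := by
      have := intervalIntegral.integral_mono_on hx.le (hφint 0 x)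
        (intervalIntegrable_const) (fun t ht => hφmono ht.2)
      simpa using this
    have hgφ : g x * φ x ≤ 1 := by
      simp only [hφ, if_neg (not_le.mpr hx)]
      rw [mul_one_div, div_le_one (by positivity)]
      have := hgleN x hx hx1
      have := le_max_left (N x) 0
      linarith
    calc g x * h x ≤ g x * (x * φ x) := by
          exact mul_le_mul_of_nonneg_left hhx (hg0 x hx)
      _ = x * (g x * φ x) := by ring
      _ ≤ x * 1 := by
          exact mul_le_mul_of_nonneg_left hgφ hx.le
      _ = x := mul_one x
  refine ⟨h, hcont.continuousOn, hmono.monotoneOn _, hnonneg, fun x hx => hpos x hx, ?_⟩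
  set G : ℝ → ℝ := fun x => if x ≤ 0 then 0 else g x * h x with hG
  refine ⟨G, ?_, fun x hx => by simp [hG, not_le.mpr hx]⟩
  intro x hx
  rcases eq_or_lt_of_le (mem_Ici.mp hx) with hx0 | hx0
  · -- x = 0
    subst hx0
    have hG0 : G 0 = 0 := by simp [hG]
    rw [ContinuousWithinAt, hG0]
    apply squeeze_zero'
    · filter_upwards [self_mem_nhdsWithin] with t ht
      by_cases h' : t ≤ 0
      · simp [hG, h']
      · have h'' : 0 < t := not_le.mp h'
        simp only [hG, if_neg h']
        exact mul_nonneg (hg0 t h'') (hnonneg t h''.le)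
    · filter_upwards [self_mem_nhdsWithin,
        inter_mem_nhdsWithin (Ici 0) (Iio_mem_nhds one_pos)] with t ht ht'
      by_cases h' : t ≤ 0
      · simp only [hG, if_pos h']
        exact ht
      · have h'' : 0 < t := not_le.mp h'
        simp only [hG, if_neg h']
        exact hbound t h'' (le_of_lt ht'.2)
    · exact Filter.Tendsto.mono_left Filter.tendsto_id nhdsWithin_le_nhds
  · -- x > 0
    have hca : ContinuousAt (fun y => g y * h y) x :=
      ((hg x (mem_Ioi.mpr hx0)).continuousAt (Ioi_mem_nhds hx0)).mul hcont.continuousAt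
    have heq : (fun y => g y * h y) =ᶠ[nhds x] G := by
      filter_upwards [Ioi_mem_nhds hx0] with t ht
      simp [hG, not_le.mpr (mem_Ioi.mp ht)]
    exact (hca.congr heq).continuousWithinAt
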